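/- For permutations π₁ ∈ S_k and π₂ ∈ S_{n−k} with n−k ≥ 2 and π₂ ≠ the identity on one letter, the permutation π₁ ∗ π₂ satisfies des(π₁ ∗ π₂) = des'(π₁) + des(π₂) + 1, where des'(σ) counts descents of σ at positions other than the last position. -/

import Mathlib

/-- Number of descents of a sequence given as a list: adjacent positions `i`
with `l(i) > l(i+1)`. -/
def desL (l : List ℕ) : ℕ := ((l.zip l.tail).filter (fun p => p.2 < p.1)).length

/-- Number of descents excluding the last position, `des'`; this equals the
number of descents of the list with its last entry removed. -/
def desL' (l : List ℕ) : ℕ := desL l.dropLast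

/-- The `∗` operation of the paper: `π₁ ∗ π₂ = A n B` where `A = π₁(1)⋯π₁(k-1)`
and `B` is `π₂` shifted up by `k-1` with its entry `1` replaced by `π₁(k)`. -/
def starPerm (l₁ l₂ : List ℕ) : List ℕ :=
  l₁.dropLast ++ [l₁.length + l₂.length] ++
    l₂.map (fun m => if m = 1 then l₁.getLastD 0 else m + (l₁.length - 1))

lemma desL_nil : desL [] = 0 := rfl
lemma desL_singleton (a : ℕ) : desL [a] = 0 := rfl

lemma desL_cons_cons (a b : ℕ) (l : List ℕ) :
    desL (a::b::l) = (if b < a then 1 else 0) + desL (b::l) := by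
  simp only [desL, List.tail_cons, List.zip_cons_cons, List.filter_cons]
  by_cases h : b < a <;> simp [h, Nat.add_comm]

lemma desL_append_cons (xs : List ℕ) (y : ℕ) (ys : List ℕ) :
    desL (xs ++ y :: ys) = desL (xs ++ [y]) + desL (y :: ys) := by
  induction xs with
  | nil => simp [desL_singleton]
  | cons a xs ih =>
    cases xs with
    | nil =>
      simp only [List.cons_append, List.nil_append, desL_cons_cons, desL_singleton]
      omega
    | cons b xs' =>
      simp only [List.cons_append, desL_cons_cons] at *
      omega

lemma desL_concat (xs : List ℕ) (y : ℕ) (h : ∀ a ∈ xs, a < y) :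
    desL (xs ++ [y]) = desL xs := by
  induction xs with
  | nil => rfl
  | cons a xs ih =>
    cases xs with
    | nil =>
      have := h a (by simp)
      simp only [List.cons_append, List.nil_append, desL_cons_cons, desL_singleton]
      simp [Nat.lt_asymm this]
    | cons b xs' =>
      simp only [List.cons_append, desL_cons_cons] at *
      rw [ih (fun x hx => h x (List.mem_cons_of_mem a hx))]

lemma desL_map (f : ℕ → ℕ) (l : List ℕ)
    (h : ∀ a ∈ l, ∀ b ∈ l, (f b < f a ↔ b < a)) : desL (l.map f) = desL l := by
  induction l with
  | nil => rfl
  | cons a l ih =>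
    cases l with
    | nil => rfl
    | cons b l' =>
      simp only [List.map_cons, desL_cons_cons]
      rw [show (f b :: List.map f l') = List.map f (b :: l') from rfl]
      rw [ih (fun x hx y hy => h x (List.mem_cons_of_mem a hx) y (List.mem_cons_of_mem a hy))]
      have := h a (by simp) b (by simp)
      congr 1
      simp [this]

/-- For `π₁ ∈ S_k` and `π₂ ∈ S_{n-k}` with `n - k ≥ 2`,
`des(π₁ ∗ π₂) = des'(π₁) + des(π₂) + 1`. -/
theorem des_starPerm (k m : ℕ) (hk : 1 ≤ k) (hm : 2 ≤ m)
    (l₁ l₂ : List ℕ)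
    (h₁ : l₁.Perm (List.range' 1 k)) (h₂ : l₂.Perm (List.range' 1 m)) :
    desL (starPerm l₁ l₂) = desL' l₁ + desL l₂ + 1 := by
  have hl1 : l₁.length = k := by simpa using h₁.length_eq
  have hl2 : l₂.length = m := by simpa using h₂.length_eq
  have hmem1 : ∀ a ∈ l₁, 1 ≤ a ∧ a ≤ k := by
    intro a ha
    have := h₁.mem_iff.mp ha
    rw [List.mem_range'_1] at this
    omega
  have hmem2 : ∀ a ∈ l₂, 1 ≤ a ∧ a ≤ m := by
    intro a ha
    have := h₂.mem_iff.mp ha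
    rw [List.mem_range'_1] at this
    omega
  have hne1 : l₁ ≠ [] := by
    intro h; rw [h] at hl1; simp at hl1; omega
  have hne2 : l₂ ≠ [] := by
    intro h; rw [h] at hl2; simp at hl2; omega
  have hLmem : l₁.getLastD 0 ∈ l₁ := by
    rw [List.getLastD_eq_getLast? , List.getLast?_eq_getLast hne1]
    exact List.getLast_mem hne1
  have hL : 1 ≤ l₁.getLastD 0 ∧ l₁.getLastD 0 ≤ k := hmem1 _ hLmem
  obtain ⟨c, t, rfl⟩ := List.exists_cons_of_ne_nil hne2
  set f : ℕ → ℕ := fun x => if x = 1 then l₁.getLastD 0 else x + (k - 1) with hf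
  have key : starPerm l₁ (c::t) = l₁.dropLast ++ (k+m) :: ((c::t).map f) := by
    simp only [starPerm, hl1, hl2, hf, List.append_assoc, List.singleton_append]
  have hfc : ∀ a ∈ (c::t), f a < k + m := by
    intro a ha
    have := hmem2 a ha
    simp only [hf]
    split <;> omega
  rw [key, desL_append_cons]
  have e2 : desL (l₁.dropLast ++ [k+m]) = desL' l₁ := by
    apply desL_concat
    intro a ha
    have := hmem1 a (List.dropLast_subset _ ha)
    omega
  have e4 : desL ((c::t).map f) = desL (c::t) := by
    apply desL_map
    intro a ha b hb
    have ha' := hmem2 a ha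
    have hb' := hmem2 b hb
    simp only [hf]
    split <;> split <;> omega
  rw [List.map_cons, desL_cons_cons, if_pos (hfc c (by simp)),
    show (f c :: t.map f) = (c::t).map f from rfl, e4, e2]
  omega
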